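/- Assume M ≠ N. For u ∈ ℂ with (u−a_m)² ≠ ħ² for every m, the monodromy matrix 𝒯(u) is invertible; write 𝒯'_{ab}(u) for the block entries of 𝒯(u)⁻¹. Then v⁺ = e₁⊗⋯⊗e₁ is a highest weight vector for the inverse monodromy matrix: 𝒯'_{kl}(u)v⁺ = 0 for k > l, and for each 1 ≤ k ≤ n, whenever the denominators below are nonzero, 𝒯'_{kk}(u)v⁺ = λ'_k(u)·v⁺ with λ'_k(u) = (Π_{m=1}^{k−1} λ_m(u+ħc_m)) / (Π_{m=1}^{k} λ_m(u+ħc_{m−1})), where λ₁(u) = Π_{m=1}^L (u−a_m−ħ), λ_k(u) = Π_{m=1}^L (u−a_m) for 2 ≤ k ≤ n, c₀ = 0 and c_k = Σ_{l=1}^k (−1)^{[l]}. -/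

import Mathlib

open scoped BigOperators

noncomputable section

namespace SuperSpin

/-- The ℤ₂-grading on `Fin n` (0-indexed): grade `0` for the first `M` indices,
grade `1` for the remaining ones.  `gr M i` is the grade of the (paper, 1-indexed)
index `i+1`. -/
def gr (M : ℕ) {n : ℕ} (i : Fin n) : ℕ := if (i : ℕ) < M then 0 else 1

/-- `End(V ⊗ V)` for `V = ℂⁿ`, as matrices indexed by pairs. -/
abbrev E2 (n : ℕ) := Matrix (Fin n × Fin n) (Fin n × Fin n) ℂ

/-- The graded permutation operator `P (e_c ⊗ e_d) = (-1)^{[c][d]} e_d ⊗ e_c`. -/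
def Pm (M n : ℕ) : E2 n :=
  Matrix.of fun p q =>
    if p.1 = q.2 ∧ p.2 = q.1 then ((-1 : ℂ) ^ (gr M q.1 * gr M q.2)) else 0

/-- The R-matrix `R(u) = u·id - hb·P`. -/
def Rm (M n : ℕ) (hb u : ℂ) : E2 n := u • (1 : E2 n) - hb • Pm M n

/-- The operator `Q (e_c ⊗ e_d) = δ_{cd} (-1)^{[d]} ∑_a e_a ⊗ e_a`. -/
def Qm (M n : ℕ) : E2 n :=
  Matrix.of fun p q => if q.1 = q.2 ∧ p.1 = p.2 then ((-1 : ℂ) ^ (gr M q.2)) else 0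

/-- Graded partial transposition in the second tensor factor. -/
def pt2 (M n : ℕ) (X : E2 n) : E2 n :=
  Matrix.of fun p q =>
    ((-1 : ℂ) ^ (gr M p.2 * gr M q.2 + gr M q.2)) * X (p.1, q.2) (q.1, p.2)

/-- Graded transposition of an `n × n` matrix: `(Aᵗ)_{ij} = (-1)^{[i][j]+[j]} A_{ji}`. -/
def gTr (M : ℕ) {n : ℕ} (A : Matrix (Fin n) (Fin n) ℂ) : Matrix (Fin n) (Fin n) ℂ :=
  Matrix.of fun i j => ((-1 : ℂ) ^ (gr M i * gr M j + gr M j)) * A j i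

/-- `A ⊗ id` acting on `V ⊗ V`. -/
def m1 {n : ℕ} (A : Matrix (Fin n) (Fin n) ℂ) : E2 n :=
  Matrix.of fun p q => A p.1 q.1 * (if p.2 = q.2 then 1 else 0)

/-- `id ⊗ A` acting on `V ⊗ V`. -/
def m2 {n : ℕ} (A : Matrix (Fin n) (Fin n) ℂ) : E2 n :=
  Matrix.of fun p q => (if p.1 = q.1 then 1 else 0) * A p.2 q.2

/-- `R₂₁(x) = P ∘ R(x) ∘ P`. -/
def R21 (M n : ℕ) (hb u : ℂ) : E2 n := Pm M n * Rm M n hb u * Pm M n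

/-- The graded reflection equation for a matrix-valued function `K`. -/
def GRE (M n : ℕ) (hb : ℂ) (K : ℂ → Matrix (Fin n) (Fin n) ℂ) : Prop :=
  ∀ u v : ℂ,
    Rm M n hb (u - v) * m1 (K u) * R21 M n hb (u + v) * m2 (K v)
      = m2 (K v) * Rm M n hb (u + v) * m1 (K u) * R21 M n hb (u - v)

/-- `End(V^{⊗m})`, with basis indexed by functions `Fin m → Fin n`. -/
abbrev Ten (n m : ℕ) := Matrix (Fin m → Fin n) (Fin m → Fin n) ℂ

/-- The Koszul embedding of `X ∈ End(V ⊗ V)` acting on the factors `i < j` of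
`V^{⊗ m}` (identity on the other factors, with the graded crossing signs produced
by conjugation with the adjacent graded permutation operators). -/
def kEmb (M n m : ℕ) (i j : Fin m) (X : E2 n) : Ten n m :=
  Matrix.of fun f g =>
    (if ∀ l, l ≠ i → l ≠ j → f l = g l then (1 : ℂ) else 0)
      * X (f i, f j) (g i, g j)
      * (-1 : ℂ) ^ ((gr M (f j) + gr M (g j)) *
          ∑ l ∈ Finset.univ.filter (fun l => i < l ∧ l < j), gr M (g l))

/-- The monodromy matrix `𝒯(u) = R_{1,2}(u-a₁) ⋯ R_{1,L+1}(u-a_L)` of the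
inhomogeneous fundamental chain, acting on `V ⊗ H = V^{⊗(L+1)}` (auxiliary space
in position `0`). -/
def Tmono (M n L : ℕ) (hb : ℂ) (a : Fin L → ℂ) (u : ℂ) : Ten n (L + 1) :=
  (List.ofFn fun k : Fin L => kEmb M n (L + 1) 0 k.succ (Rm M n hb (u - a k))).prod

/-- The block entry `X_{ab} ∈ End(H)` of an operator `X` on `V ⊗ H`. -/
def blk {n L : ℕ} (X : Ten n (L + 1)) (a b : Fin n) : Ten n L :=
  Matrix.of fun f g => X (Fin.cons a f) (Fin.cons b g)

/-- Supertrace transfer matrix `st(u) = ∑ (-1)^{[a]} 𝒯_{aa}(u)`. -/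
def stm (M n L : ℕ) (hb : ℂ) (a : Fin L → ℂ) (u : ℂ) : Ten n L :=
  ∑ i : Fin n, ((-1 : ℂ) ^ gr M i) • blk (Tmono M n L hb a u) i i

/-- Trace transfer matrix `t(u) = ∑ 𝒯_{aa}(u)`. -/
def tm (M n L : ℕ) (hb : ℂ) (a : Fin L → ℂ) (u : ℂ) : Ten n L :=
  ∑ i : Fin n, blk (Tmono M n L hb a u) i i

/-- The pseudovacuum `v⁺ = e₁ ⊗ ⋯ ⊗ e₁`. -/
def vplus (n L : ℕ) : (Fin L → Fin n) → ℂ :=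
  fun f => if ∀ l, (f l : ℕ) = 0 then 1 else 0

/-- The pseudovacuum weights `λ_j(w)` (paper index `j ≥ 1`):
`λ₁(w) = ∏ (w - a_m - hb)`, `λ_j(w) = ∏ (w - a_m)` for `j ≥ 2`. -/
def lamP (L : ℕ) (hb : ℂ) (a : Fin L → ℂ) (j : ℕ) (w : ℂ) : ℂ :=
  if j = 1 then ∏ m, (w - a m - hb) else ∏ m, (w - a m)

/-- `c_m = ∑_{l=1}^m (-1)^{[l]}` (so `c_0 = 0`). -/
def cP (M : ℕ) (m : ℕ) : ℂ := ∑ l ∈ Finset.range m, (if l < M then (1 : ℂ) else -1)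

/-- `λ'_k(w) = ∏_{m=1}^{k-1} λ_m(w + hb c_m) / ∏_{m=1}^{k} λ_m(w + hb c_{m-1})`
(paper index `k ≥ 1`). -/
def lamPr (M L : ℕ) (hb : ℂ) (a : Fin L → ℂ) (k : ℕ) (w : ℂ) : ℂ :=
  (∏ m ∈ Finset.Icc 1 (k - 1), lamP L hb a m (w + hb * cP M m)) /
    (∏ m ∈ Finset.Icc 1 k, lamP L hb a m (w + hb * cP M (m - 1)))

/-- The global generators `Δ(E_{ab}) = ∑_k E_{ab}^{(k)}` on `H = V^{⊗L}`. -/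
def Delta (M n L : ℕ) (a b : Fin n) : Ten n L :=
  ∑ k : Fin L, Matrix.of fun f g =>
    if f k = a ∧ g k = b ∧ ∀ l, l ≠ k → f l = g l then
      (-1 : ℂ) ^ ((gr M a + gr M b) *
        ∑ l ∈ Finset.univ.filter (fun l => l < k), gr M (g l))
    else 0

/-- The diagonal entry (at paper index `j`, `1 ≤ j ≤ n`) of the diagonal boundary
matrix with parameter `ξ` and blocks determined by `L₁ ≤ L₂`. -/
def kdval (ξ : ℂ) (L₁ L₂ : ℕ) (j : ℕ) (u : ℂ) : ℂ :=
  if L₁ < j ∧ j ≤ L₂ then u + ξ else ξ - u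

/-- The diagonal boundary matrix `K(u)`. -/
def Kdiag (n : ℕ) (ξ : ℂ) (L₁ L₂ : ℕ) (u : ℂ) : Matrix (Fin n) (Fin n) ℂ :=
  Matrix.diagonal fun j => kdval ξ L₁ L₂ ((j : ℕ) + 1) u

/-- An `n × n` matrix acting on the auxiliary (first) factor of `V^{⊗(L+1)}`. -/
def onAux {n L : ℕ} (A : Matrix (Fin n) (Fin n) ℂ) : Ten n (L + 1) :=
  Matrix.of fun f g => A (f 0) (g 0) * (if ∀ l, l ≠ 0 → f l = g l then 1 else 0)

/-- The double-row monodromy matrix `ℬ(u) = 𝒯(u) (K(u) ⊗ id_H) 𝒯(-u)⁻¹`. -/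
def Bmono (M n L : ℕ) (hb : ℂ) (a : Fin L → ℂ) (ξ : ℂ) (L₁ L₂ : ℕ) (u : ℂ) :
    Ten n (L + 1) :=
  Tmono M n L hb a u * onAux (Kdiag n ξ L₁ L₂ u) * (Tmono M n L hb a (-u))⁻¹

/-- The open-chain transfer matrix `b(u) = ∑ (-1)^{[a]} K⁺_{aa}(u) ℬ_{aa}(u)`. -/
def bop (M n L : ℕ) (hb : ℂ) (a : Fin L → ℂ) (ξ : ℂ) (L₁ L₂ : ℕ)
    (ξ' : ℂ) (L₁' L₂' : ℕ) (u : ℂ) : Ten n L :=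
  ∑ i : Fin n,
    (((-1 : ℂ) ^ gr M i) * Kdiag n ξ' L₁' L₂' u i i) •
      blk (Bmono M n L hb a ξ L₁ L₂ u) i i

/-- The functions `g_k(u)` of the open-chain pseudovacuum (paper index `k ≥ 1`). -/
def gP (M : ℕ) (hb ξ : ℂ) (L₁ L₂ : ℕ) (k : ℕ) (u : ℂ) : ℂ :=
  if k ≤ L₁ then ξ - u
  else if k ≤ L₂ then ξ + u - hb * cP M L₁
  else ξ - u - hb * (cP M L₁ - cP M L₂)

/-- The functions `a_k(u)` of the open-chain pseudovacuum (paper index `k ≥ 1`). -/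
def aP (M L : ℕ) (hb : ℂ) (a : Fin L → ℂ) (k : ℕ) (u : ℂ) : ℂ :=
  (if k ≤ M then (1 : ℂ) else -1) * hb *
    (2 * u * lamP L hb a k u * lamPr M L hb a k (-u)) /
    ((2 * u - hb * cP M k) * (2 * u - hb * cP M (k - 1)))
section Aux
variable {M n m : ℕ}

lemma sign_helper (x y z S : ℕ) :
    ((-1:ℂ))^((x+z)*S) * (-1)^((z+y)*S) = (-1)^((x+y)*S) := by
  rw [← pow_add, show (x+z)*S + (z+y)*S = (x+y)*S + 2*(z*S) by ring, pow_add, pow_mul]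
  norm_num

lemma Rm_apply (hb w : ℂ) (p q : Fin n × Fin n) :
    Rm M n hb w p q = w * (if p = q then 1 else 0)
      - hb * (if p.1 = q.2 ∧ p.2 = q.1 then ((-1:ℂ))^(gr M q.1 * gr M q.2) else 0) := by
  simp [Rm, Pm, Matrix.one_apply, Matrix.sub_apply, Matrix.smul_apply, mul_ite, mul_zero]

lemma Pm_mul_Pm : Pm M n * Pm M n = 1 := by
  ext p q
  rw [Matrix.mul_apply]
  rw [Finset.sum_eq_single (p.2, p.1)]
  · by_cases h : p = q
    · subst h
      simp only [Pm, Matrix.of_apply, Matrix.one_apply, if_pos rfl, and_self, if_true]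
      rw [← pow_add,
        show gr M p.2 * gr M p.1 + gr M p.1 * gr M p.2 = 2*(gr M p.1 * gr M p.2) by ring,
        pow_mul]
      norm_num
    · have : ¬(p.2 = q.2 ∧ p.1 = q.1) := by
        intro ⟨h1, h2⟩; exact h (Prod.ext h2 h1)
      simp [Pm, Matrix.one_apply, h, this]
  · intro b _ hb
    have : ¬(p.1 = b.2 ∧ p.2 = b.1) := by
      intro ⟨h1, h2⟩; exact hb (by rw [Prod.ext_iff]; exact ⟨h2.symm, h1.symm⟩)
    simp [Pm, this]
  · simp

lemma Rm_mul_Rm (hb w : ℂ) :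
    Rm M n hb w * Rm M n hb (-w) = (hb^2 - w^2) • (1 : E2 n) := by
  simp only [Rm, sub_mul, mul_sub, smul_mul_assoc, mul_smul_comm, Pm_mul_Pm,
    smul_smul, one_mul, mul_one]
  module

end Aux
section KE
variable {M n m : ℕ}

lemma kEmb_mul {i j : Fin m} (hij : i ≠ j) (X Y : E2 n) :
    kEmb M n m i j X * kEmb M n m i j Y = kEmb M n m i j (X * Y) := by
  classical
  ext f g
  rw [Matrix.mul_apply]
  simp only [kEmb, Matrix.of_apply, Matrix.mul_apply]
  by_cases hfg : ∀ l, l ≠ i → l ≠ j → f l = g l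
  · rw [if_pos hfg, one_mul, Finset.sum_mul]
    rw [← Finset.sum_filter_of_ne
      (p := fun h : Fin m → Fin n => ∀ l, l ≠ i → l ≠ j → h l = g l)
      (fun h _ hne => by
        by_contra hp
        simp only [if_neg hp, zero_mul, mul_zero] at hne
        exact hne rfl)]
    refine Finset.sum_nbij' (fun h => (h i, h j))
      (fun p => Function.update (Function.update g i p.1) j p.2)
      (fun h _ => Finset.mem_univ _) ?_ ?_ ?_ ?_
    · intro p _
      simp only [Finset.mem_filter, Finset.mem_univ, true_and]
      intro l hli hlj
      rw [Function.update_of_ne hlj, Function.update_of_ne hli]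
    · intro h hh
      simp only [Finset.mem_filter, Finset.mem_univ, true_and] at hh
      funext l
      show Function.update (Function.update g i (h i)) j (h j) l = h l
      by_cases hlj : l = j
      · subst hlj; simp
      · by_cases hli : l = i
        · subst hli; rw [Function.update_of_ne hlj, Function.update_self]
        · rw [Function.update_of_ne hlj, Function.update_of_ne hli]
          exact (hh l hli hlj).symm
    · intro p _
      show (Function.update (Function.update g i p.1) j p.2 i,
        Function.update (Function.update g i p.1) j p.2 j) = p
      rw [Function.update_self, Function.update_of_ne hij, Function.update_self]
    · intro h hh
      simp only [Finset.mem_filter, Finset.mem_univ, true_and] at hh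
      have hfh : ∀ l, l ≠ i → l ≠ j → f l = h l := fun l hli hlj =>
        (hfg l hli hlj).trans (hh l hli hlj).symm
      rw [if_pos hfh, if_pos hh, one_mul, one_mul]
      have hsum : ∑ l ∈ Finset.univ.filter (fun l => i < l ∧ l < j), gr M (h l)
          = ∑ l ∈ Finset.univ.filter (fun l => i < l ∧ l < j), gr M (g l) := by
        refine Finset.sum_congr rfl (fun l hl => ?_)
        simp only [Finset.mem_filter, Finset.mem_univ, true_and] at hl
        rw [hh l (ne_of_gt hl.1) (ne_of_lt hl.2)]
      rw [hsum]
      have hs := sign_helper (gr M (f j)) (gr M (g j)) (gr M (h j))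
        (∑ l ∈ Finset.univ.filter (fun l => i < l ∧ l < j), gr M (g l))
      linear_combination (X (f i, f j) (h i, h j) * Y (h i, h j) (g i, g j)) * hs
  · rw [if_neg hfg, zero_mul, zero_mul]
    refine Finset.sum_eq_zero (fun h _ => ?_)
    by_cases h1 : ∀ l, l ≠ i → l ≠ j → f l = h l
    · by_cases h2 : ∀ l, l ≠ i → l ≠ j → h l = g l
      · exact absurd (fun l hli hlj => (h1 l hli hlj).trans (h2 l hli hlj)) hfg
      · simp only [if_neg h2, zero_mul, mul_zero]
    · simp only [if_neg h1, zero_mul, mul_zero]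

lemma kEmb_one {i j : Fin m} (hij : i ≠ j) : kEmb M n m i j (1 : E2 n) = 1 := by
  ext f g
  simp only [kEmb, Matrix.of_apply, Matrix.one_apply]
  by_cases h : f = g
  · subst h
    rw [if_pos (fun l _ _ => rfl), if_pos rfl, if_pos rfl, one_mul, one_mul,
      show (gr M (f j) + gr M (f j)) * (∑ l ∈ Finset.univ.filter (fun l => i < l ∧ l < j), gr M (f l))
        = 2 * (gr M (f j) * ∑ l ∈ Finset.univ.filter (fun l => i < l ∧ l < j), gr M (f l)) by ring,
      pow_mul]
    norm_num
  · rw [if_neg h]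
    by_cases hoff : ∀ l, l ≠ i → l ≠ j → f l = g l
    · have hne : ¬((f i, f j) = (g i, g j)) := by
        intro he
        rw [Prod.mk.injEq] at he
        exact h (funext fun l => by
          by_cases hli : l = i
          · subst hli; exact he.1
          · by_cases hlj : l = j
            · subst hlj; exact he.2
            · exact hoff l hli hlj)
      rw [if_neg hne, mul_zero, zero_mul]
    · rw [if_neg hoff, zero_mul, zero_mul]

lemma kEmb_smul (i j : Fin m) (c : ℂ) (X : E2 n) :
    kEmb M n m i j (c • X) = c • kEmb M n m i j X := by
  ext f g
  simp only [kEmb, Matrix.of_apply, Matrix.smul_apply, smul_eq_mul]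
  ring

end KE
section Tel

lemma telescope {ι : Type*} [Fintype ι] [DecidableEq ι] :
    ∀ (L : ℕ) (A B : Fin L → Matrix ι ι ℂ) (c : Fin L → ℂ),
      (∀ k, A k * B k = c k • 1) →
      (List.ofFn A).prod * (List.ofFn B).reverse.prod = (∏ k, c k) • 1
  | 0, A, B, c, h => by simp
  | (L+1), A, B, c, h => by
    have IH := telescope L (fun k => A k.succ) (fun k => B k.succ) (fun k => c k.succ)
      (fun k => h k.succ)
    rw [List.ofFn_succ, List.ofFn_succ (f := B), List.reverse_cons, List.prod_append,
      List.prod_cons, List.prod_cons, List.prod_nil, mul_one]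
    calc A 0 * (List.ofFn fun k => A k.succ).prod *
          ((List.ofFn fun k => B k.succ).reverse.prod * B 0)
        = A 0 * ((List.ofFn fun k => A k.succ).prod *
            (List.ofFn fun k => B k.succ).reverse.prod) * B 0 := by
          rw [mul_assoc, mul_assoc, mul_assoc]
      _ = A 0 * ((∏ k : Fin L, c k.succ) • 1) * B 0 := by rw [IH]
      _ = (∏ k : Fin L, c k.succ) • (A 0 * B 0) := by
          rw [mul_smul_comm, smul_mul_assoc, mul_one]
      _ = (∏ k : Fin (L+1), c k) • (1 : Matrix ι ι ℂ) := by
          rw [h 0, smul_smul, Fin.prod_univ_succ, mul_comm]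

end Tel

section Col

variable {M n L : ℕ} [NeZero n]

/-- One site factor of the (reversed) monodromy product. -/
def siteF (M n L : ℕ) (hb : ℂ) (p : Fin (L+1) × ℂ) : Ten n (L+1) :=
  kEmb M n (L+1) 0 p.1 (Rm M n hb p.2)

/-- The basis column `e_l ⊗ v⁺`. -/
def xcol (n L : ℕ) [NeZero n] (l : Fin n) : Fin (L+1) → Fin n :=
  Fin.cons l (fun _ => 0)

lemma xcol_zero (l : Fin n) : xcol n L l 0 = l := rfl

lemma xcol_ne (l : Fin n) {j : Fin (L+1)} (hj : j ≠ 0) : xcol n L l j = 0 := by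
  cases j using Fin.cases with
  | zero => exact absurd rfl hj
  | succ i => simp [xcol]

lemma gr_zero (hM : 1 ≤ M) : gr M (0 : Fin n) = 0 := by
  simp only [gr, Fin.val_zero]
  exact if_pos hM

omit [NeZero n] in
lemma siteF_apply (hb : ℂ) (p : Fin (L+1) × ℂ) (r s : Fin (L+1) → Fin n) :
    siteF M n L hb p r s =
      (if ∀ l, l ≠ 0 → l ≠ p.1 → r l = s l then (1:ℂ) else 0)
        * Rm M n hb p.2 (r 0, r p.1) (s 0, s p.1)
        * (-1 : ℂ) ^ ((gr M (r p.1) + gr M (s p.1)) *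
            ∑ l ∈ Finset.univ.filter (fun l => 0 < l ∧ l < p.1), gr M (s l)) := rfl

lemma xcol_sign (hM : 1 ≤ M) (l : Fin n) (j : Fin (L+1)) :
    ∑ t ∈ Finset.univ.filter (fun t => 0 < t ∧ t < j), gr M (xcol n L l t) = 0 := by
  refine Finset.sum_eq_zero (fun t ht => ?_)
  simp only [Finset.mem_filter, Finset.mem_univ, true_and] at ht
  rw [xcol_ne l ht.1.ne', gr_zero hM]

lemma col_zero (hM : 1 ≤ M) (hb : ℂ) :
    ∀ (S : List (Fin (L+1) × ℂ)), (∀ p ∈ S, p.1 ≠ 0) →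
    ∀ r, (S.map (siteF M n L hb)).prod r (xcol n L 0)
        = if r = xcol n L 0 then (S.map (fun p => p.2 - hb)).prod else 0
  | [] => by
    intro _ r
    simp only [List.map_nil, List.prod_nil, Matrix.one_apply]
  | p :: S' => by
    intro hp0 r
    have hp1 : p.1 ≠ 0 := hp0 p List.mem_cons_self
    have hS'0 : ∀ q ∈ S', q.1 ≠ 0 := fun q hq => hp0 q (List.mem_cons_of_mem _ hq)
    have IH := col_zero hM hb S' hS'0
    have hx0 : ∀ j, xcol n L (0 : Fin n) j = (0 : Fin n) := fun j => by
      by_cases hj : j = 0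
      · subst hj; rfl
      · exact xcol_ne _ hj
    simp only [List.map_cons, List.prod_cons, Matrix.mul_apply]
    rw [Finset.sum_eq_single (xcol n L 0)]
    · rw [IH (xcol n L 0), if_pos rfl]
      have hF : siteF M n L hb p r (xcol n L 0)
          = if r = xcol n L 0 then p.2 - hb else 0 := by
        rw [siteF_apply, xcol_sign hM, mul_zero, pow_zero, mul_one]
        by_cases hr : r = xcol n L 0
        · subst hr
          simp [hx0, Rm_apply, gr_zero hM]
        · rw [if_neg hr]
          by_cases hd : ∀ t, t ≠ 0 → t ≠ p.1 → r t = xcol n L 0 t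
          · have key : ¬(r 0 = (0:Fin n) ∧ r p.1 = 0) := by
              intro ⟨h1, h2⟩
              exact hr (funext fun t => by
                by_cases ht0 : t = 0
                · subst ht0; rw [h1, hx0]
                · by_cases htp : t = p.1
                  · subst htp; rw [h2, hx0]
                  · exact hd t ht0 htp)
            rw [if_pos hd]
            simp only [hx0]
            rw [Rm_apply]
            rw [if_neg (fun h => key ⟨congrArg Prod.fst h, congrArg Prod.snd h⟩),
              if_neg key]
            ring
          · rw [if_neg hd]; ring
      rw [hF]
      by_cases hr : r = xcol n L 0 <;> simp [hr]
    · intro s _ hs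
      rw [IH s, if_neg hs, mul_zero]
    · simp

lemma col_ne (hM : 1 ≤ M) (hb : ℂ) (l : Fin n) (hl : l ≠ 0) :
    ∀ (S : List (Fin (L+1) × ℂ)), (∀ p ∈ S, p.1 ≠ 0) → (S.map Prod.fst).Nodup →
    ∀ r : Fin (L+1) → Fin n,
      (r 0 ≠ 0 → (S.map (siteF M n L hb)).prod r (xcol n L l)
          = if r = xcol n L l then (S.map Prod.snd).prod else 0)
      ∧ ((S.map (siteF M n L hb)).prod r (xcol n L l) ≠ 0 →
          ∀ j, j ≠ 0 → j ∉ S.map Prod.fst → r j = 0)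
  | [] => by
    intro _ _ r
    constructor
    · intro _
      simp only [List.map_nil, List.prod_nil, Matrix.one_apply]
    · intro hne j hj _
      have hr : r = xcol n L l := by
        by_contra hr
        simp only [List.map_nil, List.prod_nil, Matrix.one_apply, if_neg hr,
          ne_eq, not_true_eq_false] at hne
      rw [hr]
      exact xcol_ne l hj
  | p :: S' => by
    intro hp0 hnd r
    have hp1 : p.1 ≠ 0 := hp0 p List.mem_cons_self
    have hS'0 : ∀ q ∈ S', q.1 ≠ 0 := fun q hq => hp0 q (List.mem_cons_of_mem _ hq)
    rw [List.map_cons, List.nodup_cons] at hnd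
    have IH := col_ne hM hb l hl S' hS'0 hnd.2
    have e2 : xcol n L l p.1 = 0 := xcol_ne l hp1
    simp only [List.map_cons, List.prod_cons, Matrix.mul_apply]
    constructor
    · intro hr0
      rw [Finset.sum_eq_single (xcol n L l)]
      · rw [(IH (xcol n L l)).1 (by rw [xcol_zero]; exact hl), if_pos rfl]
        have hF : siteF M n L hb p r (xcol n L l)
            = if r = xcol n L l then p.2 else 0 := by
          rw [siteF_apply, xcol_sign hM, mul_zero, pow_zero, mul_one]
          by_cases hr : r = xcol n L l
          · subst hr
            simp [Rm_apply, e2, xcol_zero, hl, Ne.symm hl]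
          · rw [if_neg hr]
            by_cases hd : ∀ t, t ≠ 0 → t ≠ p.1 → r t = xcol n L l t
            · have hpair : ¬((r 0, r p.1) = (xcol n L l 0, xcol n L l p.1)) := by
                intro h
                rw [Prod.mk.injEq] at h
                exact hr (funext fun t => by
                  by_cases ht0 : t = 0
                  · subst ht0; exact h.1
                  · by_cases htp : t = p.1
                    · subst htp; exact h.2
                    · exact hd t ht0 htp)
              have hswap : ¬(r 0 = xcol n L l p.1 ∧ r p.1 = xcol n L l 0) := by
                rw [e2]
                exact fun h => hr0 h.1
              rw [if_pos hd, Rm_apply, if_neg hpair, if_neg hswap]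
              ring
            · rw [if_neg hd]; ring
        rw [hF]
        by_cases hr : r = xcol n L l <;> simp [hr]
      · intro s _ hs
        by_cases hs0 : s 0 ≠ 0
        · rw [(IH s).1 hs0, if_neg hs, mul_zero]
        · push_neg at hs0
          by_cases hT : (S'.map (siteF M n L hb)).prod s (xcol n L l) = 0
          · rw [hT, mul_zero]
          · have hsp : s p.1 = 0 := (IH s).2 hT p.1 hp1 hnd.1
            have hF0 : siteF M n L hb p r s = 0 := by
              rw [siteF_apply, hs0, hsp, Rm_apply]
              have h1 : ¬((r 0, r p.1) = ((0:Fin n), (0:Fin n))) := by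
                intro h
                rw [Prod.mk.injEq] at h
                exact hr0 h.1
              have h2 : ¬(r 0 = (0:Fin n) ∧ r p.1 = 0) := fun h => hr0 h.1
              rw [if_neg h1, if_neg h2]
              ring
            rw [hF0, zero_mul]
      · simp
    · intro hne j hj hjmem
      rw [List.mem_cons] at hjmem
      push_neg at hjmem
      obtain ⟨s, _, hs⟩ := Finset.exists_ne_zero_of_sum_ne_zero hne
      have hF : siteF M n L hb p r s ≠ 0 := fun h => hs (by rw [h, zero_mul])
      have hT : (S'.map (siteF M n L hb)).prod s (xcol n L l) ≠ 0 :=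
        fun h => hs (by rw [h, mul_zero])
      have hsj : s j = 0 := (IH s).2 hT j hj hjmem.2
      have hd : ∀ t, t ≠ 0 → t ≠ p.1 → r t = s t := by
        by_contra hd
        rw [siteF_apply, if_neg hd, zero_mul, zero_mul] at hF
        exact hF rfl
      rw [hd j hj hjmem.1, hsj]

end Col
section Main

lemma val_zero_iff {n : ℕ} [NeZero n] (a : Fin n) : (a : ℕ) = 0 ↔ a = 0 := by
  rw [Fin.ext_iff, Fin.val_zero]

lemma prod_Icc_one (K : ℕ) (f : ℕ → ℂ) :
    ∏ m ∈ Finset.Icc 1 K, f m = ∏ i ∈ Finset.range K, f (i+1) := by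
  induction K with
  | zero => simp
  | succ K ih => rw [Finset.prod_range_succ, ← ih, Finset.prod_Icc_succ_top (by omega)]

lemma cP_zero (M : ℕ) : cP M 0 = 0 := by simp [cP]

lemma cP_one {M : ℕ} (hM : 1 ≤ M) : cP M 1 = 1 := by
  rw [cP, Finset.sum_range_one, if_pos (by omega : 0 < M)]

end Main
lemma denNum1 (Mv L : ℕ) (hM : 1 ≤ Mv) (hb u : ℂ) (sh : Fin L → ℂ) (k' : ℕ) :
    (∏ m ∈ Finset.Icc 1 (k'+1+1), lamP L hb sh m (u + hb * cP Mv (m-1)))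
    = ((∏ i ∈ Finset.range k', (∏ mm, (u + hb * cP Mv (i+2) - sh mm)))
        * (∏ m, (u - sh m + hb))) * (∏ m, (u - sh m - hb)) := by
  rw [prod_Icc_one, Finset.prod_range_succ', Finset.prod_range_succ']
  simp only [Nat.add_sub_cancel]
  have e1 : (∏ x ∈ Finset.range k',
      lamP L hb sh (x+1+1+1) (u + hb * cP Mv (x+1+1)))
      = ∏ i ∈ Finset.range k', ∏ mm, (u + hb * cP Mv (i+2) - sh mm) := by
    refine Finset.prod_congr rfl fun i _ => ?_
    rw [lamP, if_neg (by omega)]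
  have e2 : lamP L hb sh (0+1+1) (u + hb * cP Mv (0+1))
      = ∏ m, (u - sh m + hb) := by
    rw [show (0:ℕ)+1 = 1 by rfl, cP_one hM, lamP, if_neg (by omega)]
    exact Finset.prod_congr rfl fun m _ => by ring
  have e3 : lamP L hb sh (0+1) (u + hb * cP Mv 0)
      = ∏ m, (u - sh m - hb) := by
    rw [cP_zero, mul_zero, add_zero, lamP, if_pos rfl]
  rw [e1, e2, e3]

lemma denNum2 (Mv L : ℕ) (hM : 1 ≤ Mv) (hb u : ℂ) (sh : Fin L → ℂ) (k' : ℕ) :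
    (∏ m ∈ Finset.Icc 1 (k'+1), lamP L hb sh m (u + hb * cP Mv m))
    = (∏ i ∈ Finset.range k', (∏ mm, (u + hb * cP Mv (i+2) - sh mm)))
        * (∏ m, (u - sh m)) := by
  rw [prod_Icc_one, Finset.prod_range_succ']
  have e1 : (∏ x ∈ Finset.range k',
      lamP L hb sh (x+1+1) (u + hb * cP Mv (x+1+1)))
      = ∏ i ∈ Finset.range k', ∏ mm, (u + hb * cP Mv (i+2) - sh mm) := by
    refine Finset.prod_congr rfl fun i _ => ?_
    rw [lamP, if_neg (by omega)]
  have e2 : lamP L hb sh (0+1) (u + hb * cP Mv (0+1))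
      = ∏ m, (u - sh m) := by
    rw [show (0:ℕ)+1 = 1 by rfl, cP_one hM, lamP, if_pos rfl]
    exact Finset.prod_congr rfl fun m _ => by ring
  rw [e1, e2]
/-- For `M ≠ N` and `(u - a_m)² ≠ ħ²` for all `m`, the
monodromy matrix `𝒯(u)` is invertible, `v⁺` is a highest weight vector for
`𝒯(u)⁻¹`, and the diagonal blocks act on `v⁺` by
`λ'_k(u) = ∏_{m<k} λ_m(u + ħ c_m) / ∏_{m≤k} λ_m(u + ħ c_{m-1})`
(whenever the denominators are nonzero). -/
theorem statement12 (M N : ℕ) (hM : 1 ≤ M) (hN : 1 ≤ N) (hMN : M ≠ N)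
    (hb : ℂ) (hhb : hb ≠ 0) (L : ℕ) (hL : 1 ≤ L) (sh : Fin L → ℂ) (u : ℂ)
    (hu : ∀ m : Fin L, (u - sh m) ^ 2 ≠ hb ^ 2) :
    IsUnit (Tmono M (M + N) L hb sh u) ∧
    (∀ k l : Fin (M + N), l < k →
      (blk ((Tmono M (M + N) L hb sh u)⁻¹) k l).mulVec (vplus (M + N) L) = 0) ∧
    (∀ k : Fin (M + N),
      (∏ m ∈ Finset.Icc 1 ((k : ℕ) + 1), lamP L hb sh m (u + hb * cP M (m - 1))) ≠ 0 →
      (blk ((Tmono M (M + N) L hb sh u)⁻¹) k k).mulVec (vplus (M + N) L)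
        = lamPr M L hb sh ((k : ℕ) + 1) u • vplus (M + N) L) := by
  classical
  haveI : NeZero (M + N) := ⟨by omega⟩
  -- the factors of the monodromy matrix and their inverses
  set A : Fin L → Ten (M+N) (L+1) :=
    fun k => kEmb M (M+N) (L+1) 0 k.succ (Rm M (M+N) hb (u - sh k)) with hA
  set B : Fin L → Ten (M+N) (L+1) :=
    fun k => kEmb M (M+N) (L+1) 0 k.succ (Rm M (M+N) hb (sh k - u)) with hB
  have hAB : ∀ k, A k * B k = (hb^2 - (u - sh k)^2) • 1 := by
    intro k
    rw [hA, hB]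
    rw [kEmb_mul (Ne.symm (Fin.succ_ne_zero k)),
      show sh k - u = -(u - sh k) by ring, Rm_mul_Rm,
      kEmb_smul, kEmb_one (Ne.symm (Fin.succ_ne_zero k))]
  have hTm : Tmono M (M+N) L hb sh u = (List.ofFn A).prod := rfl
  have hCs : (∏ m, (hb^2 - (u - sh m)^2)) ≠ 0 :=
    Finset.prod_ne_zero_iff.mpr fun m _ => sub_ne_zero.mpr (Ne.symm (hu m))
  have htel : (List.ofFn A).prod * (List.ofFn B).reverse.prod
      = (∏ m, (hb^2 - (u - sh m)^2)) • 1 := telescope L A B _ hAB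
  have hinv1 : Tmono M (M+N) L hb sh u *
      ((∏ m, (hb^2 - (u - sh m)^2))⁻¹ • (List.ofFn B).reverse.prod) = 1 := by
    rw [hTm, mul_smul_comm, htel, smul_smul, inv_mul_cancel₀ hCs, one_smul]
  have hUnit : IsUnit (Tmono M (M+N) L hb sh u) :=
    ⟨⟨_, _, hinv1, mul_eq_one_comm.mp hinv1⟩, rfl⟩
  have hInv : (Tmono M (M+N) L hb sh u)⁻¹
      = (∏ m, (hb^2 - (u - sh m)^2))⁻¹ • (List.ofFn B).reverse.prod :=
    Matrix.inv_eq_right_inv hinv1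
  -- the reversed product as a site list
  set S : List (Fin (L+1) × ℂ) :=
    (List.ofFn fun k : Fin L => ((Fin.succ k : Fin (L+1)), sh k - u)).reverse with hSdef
  have hBS : (List.ofFn B).reverse = S.map (siteF M (M+N) L hb) := by
    rw [hSdef, List.map_reverse]
    congr 1
    rw [List.map_ofFn]
    rfl
  have hS0 : ∀ p ∈ S, p.1 ≠ 0 := by
    intro p hp
    rw [hSdef, List.mem_reverse] at hp
    obtain ⟨k, hk⟩ := List.mem_ofFn.mp hp
    rw [← hk]
    exact Fin.succ_ne_zero k
  have hSnd : (S.map Prod.fst).Nodup := by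
    rw [hSdef, List.map_reverse, List.nodup_reverse, List.map_ofFn, List.nodup_ofFn]
    intro a b hab
    exact Fin.succ_injective L hab
  have hsnd : (S.map Prod.snd).prod = ∏ k, (sh k - u) := by
    rw [hSdef, List.map_reverse, List.prod_reverse, List.map_ofFn, List.prod_ofFn]
    rfl
  have hsnd2 : (S.map (fun p => p.2 - hb)).prod = ∏ k, (sh k - u - hb) := by
    rw [hSdef, List.map_reverse, List.prod_reverse, List.map_ofFn, List.prod_ofFn]
    rfl
  -- reduction of the action on the pseudovacuum to a single matrix entry
  have hmv : ∀ (X : Ten (M+N) (L+1)) (k l : Fin (M+N)) (f : Fin L → Fin (M+N)),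
      (blk X k l).mulVec (vplus (M+N) L) f = X (Fin.cons k f) (xcol (M+N) L l) := by
    intro X k l f
    show ∑ g, blk X k l f g * vplus (M+N) L g = _
    rw [Finset.sum_eq_single (fun _ => (0 : Fin (M+N)))]
    · have : vplus (M+N) L (fun _ => (0 : Fin (M+N))) = 1 := if_pos (fun _ => rfl)
      rw [this, mul_one]
      rfl
    · intro g _ hg
      have : vplus (M+N) L g = 0 := by
        refine if_neg (fun hall => hg (funext fun i => ?_))
        exact (val_zero_iff (g i)).mp (hall i)
      rw [this, mul_zero]
    · intro h
      exact absurd (Finset.mem_univ _) h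
  have hcons : ∀ (k : Fin (M+N)) (f : Fin L → Fin (M+N)),
      (Fin.cons k f = xcol (M+N) L k) ↔ f = fun _ => 0 := by
    intro k f
    unfold xcol
    rw [Fin.cons_inj]
    simp
  have hvp : ∀ f : Fin L → Fin (M+N),
      vplus (M+N) L f = if f = (fun _ => 0) then 1 else 0 := by
    intro f
    unfold vplus
    congr 1
    simp only [eq_iff_iff]
    constructor
    · intro hall
      exact funext fun i => (val_zero_iff (f i)).mp (hall i)
    · intro hf i
      rw [hf]
      rfl
  refine ⟨hUnit, ?_, ?_⟩
  · -- highest weight property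
    intro k l hlk
    have hk0 : k ≠ 0 := by
      intro h
      rw [h, Fin.lt_def, Fin.val_zero] at hlk
      omega
    funext f
    rw [Pi.zero_apply, hmv, hInv, hBS, Matrix.smul_apply, smul_eq_mul]
    by_cases hl0 : l = 0
    · subst hl0
      rw [col_zero hM hb S hS0 (Fin.cons k f), if_neg, mul_zero]
      intro h
      have h0 := congrFun h 0
      rw [Fin.cons_zero, xcol_zero] at h0
      exact hk0 h0
    · rw [(col_ne hM hb l hl0 S hS0 hSnd (Fin.cons k f)).1
        (by rw [Fin.cons_zero]; exact hk0), if_neg, mul_zero]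
      intro h
      have h0 := congrFun h 0
      rw [Fin.cons_zero, xcol_zero] at h0
      rw [h0] at hlk
      exact absurd hlk (lt_irrefl l)
  · -- diagonal entries
    intro k hden
    funext f
    rw [hmv, hInv, hBS, Matrix.smul_apply, smul_eq_mul, Pi.smul_apply, smul_eq_mul,
      hvp f]
    by_cases hk0 : k = 0
    · subst hk0
      rw [col_zero hM hb S hS0 (Fin.cons 0 f), hsnd2]
      have hlam1 : lamPr M L hb sh ((0:ℕ) + 1) u = 1 / (∏ m, (u - sh m - hb)) := by
        rw [lamPr, show (0:ℕ)+1-1 = 0 from rfl, Finset.Icc_eq_empty (by omega),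
          Finset.prod_empty, Finset.Icc_self, Finset.prod_singleton, cP_zero,
          mul_zero, add_zero, lamP, if_pos rfl]
      have hBv : (∏ m, (u - sh m - hb)) ≠ 0 := by
        refine Finset.prod_ne_zero_iff.mpr fun m _ => fun h => hu m ?_
        rw [sub_eq_zero] at h
        rw [h]
      have id1 : (∏ m, (sh m - u - hb)) * (∏ m, (u - sh m - hb))
          = ∏ m, (hb^2 - (u - sh m)^2) := by
        rw [← Finset.prod_mul_distrib]
        exact Finset.prod_congr rfl fun m _ => by ring
      rw [Fin.val_zero, hlam1]
      by_cases hf : f = fun _ => 0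
      · rw [if_pos ((hcons 0 f).mpr hf), if_pos hf, mul_one]
        rw [inv_mul_eq_div, div_eq_div_iff hCs hBv, one_mul]
        linear_combination id1
      · rw [if_neg (fun h => hf ((hcons 0 f).mp h)), if_neg hf, mul_zero, mul_zero]
    · -- k ≠ 0
      have hkv : (k : ℕ) ≠ 0 := fun h => hk0 ((val_zero_iff k).mp h)
      obtain ⟨k', hk'⟩ : ∃ k', (k:ℕ) = k' + 1 := ⟨(k:ℕ) - 1, by omega⟩
      rw [(col_ne hM hb k hk0 S hS0 hSnd (Fin.cons k f)).1
        (by rw [Fin.cons_zero]; exact hk0), hsnd]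
      rw [hk'] at hden ⊢
      have hBv : (∏ m, (u - sh m - hb)) ≠ 0 := by
        refine Finset.prod_ne_zero_iff.mpr fun m _ => fun h => hu m ?_
        rw [sub_eq_zero] at h
        rw [h]
      have hCp : (∏ m, (u - sh m + hb)) ≠ 0 := by
        refine Finset.prod_ne_zero_iff.mpr fun m _ => fun h => hu m ?_
        have : u - sh m = -hb := by linear_combination h
        rw [this]
        ring
      -- the denominator and numerator of λ'
      have hDen : (∏ m ∈ Finset.Icc 1 (k'+1+1), lamP L hb sh m (u + hb * cP M (m-1)))
          = ((∏ i ∈ Finset.range k', (∏ mm, (u + hb * cP M (i+2) - sh mm)))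
              * (∏ m, (u - sh m + hb))) * (∏ m, (u - sh m - hb)) :=
        denNum1 M L hM hb u sh k'
      have hNum : (∏ m ∈ Finset.Icc 1 (k'+1), lamP L hb sh m (u + hb * cP M m))
          = (∏ i ∈ Finset.range k', (∏ mm, (u + hb * cP M (i+2) - sh mm)))
              * (∏ m, (u - sh m)) :=
        denNum2 M L hM hb u sh k'
      have hlampr : lamPr M L hb sh (k'+1+1) u
          = ((∏ i ∈ Finset.range k', (∏ mm, (u + hb * cP M (i+2) - sh mm)))
              * (∏ m, (u - sh m)))
            / (((∏ i ∈ Finset.range k', (∏ mm, (u + hb * cP M (i+2) - sh mm)))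
              * (∏ m, (u - sh m + hb))) * (∏ m, (u - sh m - hb))) := by
        rw [lamPr, show k'+1+1-1 = k'+1 from rfl, hNum, hDen]
      rw [hDen] at hden
      rw [hlampr]
      have id2 : (∏ m, (sh m - u)) * ((∏ m, (u - sh m - hb)) * (∏ m, (u - sh m + hb)))
          = (∏ m, (hb^2 - (u - sh m)^2)) * (∏ m, (u - sh m)) := by
        rw [← Finset.prod_mul_distrib, ← Finset.prod_mul_distrib,
          ← Finset.prod_mul_distrib]
        exact Finset.prod_congr rfl fun m _ => by ring
      by_cases hf : f = fun _ => 0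
      · rw [if_pos ((hcons k f).mpr hf), if_pos hf, mul_one]
        rw [inv_mul_eq_div, div_eq_div_iff hCs hden]
        linear_combination (∏ i ∈ Finset.range k', (∏ mm, (u + hb * cP M (i+2) - sh mm))) * id2
      · rw [if_neg (fun h => hf ((hcons k f).mp h)), if_neg hf, mul_zero, mul_zero]

end SuperSpin
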